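/- Let M and K be real symmetric positive definite n×n matrices, K_μ a real n×n matrix, and constants α̃₀ > 0, c_Ω > 0, β > 0 such that ⟨K_μ q, q⟩ ≥ α̃₀ ⟨Kq, q⟩ (coercivity) and c_Ω² ⟨Mq, q⟩ ≤ ⟨Kq, q⟩ (Poincaré inequality) hold for all q ∈ ℝⁿ. Then for every nonzero q ∈ ℝⁿ, sup over nonzero pairs (v, z) ∈ ℝⁿ × ℝⁿ of (⟨K_μ z, q⟩ − ⟨Mv, q⟩) / ((2β⟨Mv, v⟩ + ⟨Mz, z⟩)^{1/2} · ⟨Kq, q⟩^{1/2}) ≥ c_Ω · α̃₀; that is, the full discrete optimal control saddle point problem satisfies the discrete inf-sup condition with constant β₀ = c_Ω α̃₀. -/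

import Mathlib

open Matrix

/-- Cauchy–Schwarz for the bilinear form of a real positive semidefinite matrix. -/
lemma psd_cauchy_schwarz {n : ℕ} {M : Matrix (Fin n) (Fin n) ℝ} (hM : M.PosSemidef)
    (x y : Fin n → ℝ) :
    (M.mulVec x ⬝ᵥ y) ^ 2 ≤ (M.mulVec x ⬝ᵥ x) * (M.mulVec y ⬝ᵥ y) := by
  have hsym : Mᵀ = M := by
    rw [← Matrix.conjTranspose_eq_transpose_of_trivial]; exact hM.1
  have hsymm : ∀ a b : Fin n → ℝ, M.mulVec a ⬝ᵥ b = M.mulVec b ⬝ᵥ a := by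
    intro a b
    rw [dotProduct_comm, Matrix.dotProduct_mulVec, ← Matrix.mulVec_transpose, hsym,
      dotProduct_comm]
  have key : ∀ t : ℝ, 0 ≤ (M.mulVec y ⬝ᵥ y) * (t * t) + (2 * (M.mulVec x ⬝ᵥ y)) * t
      + (M.mulVec x ⬝ᵥ x) := by
    intro t
    have h0 := hM.dotProduct_mulVec_nonneg (x + t • y)
    simp only [star_trivial] at h0
    have hexp : (x + t • y) ⬝ᵥ M.mulVec (x + t • y)
        = (M.mulVec y ⬝ᵥ y) * (t * t) + (2 * (M.mulVec x ⬝ᵥ y)) * t + (M.mulVec x ⬝ᵥ x) := by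
      rw [Matrix.mulVec_add, Matrix.mulVec_smul]
      simp only [add_dotProduct, smul_dotProduct, dotProduct_add,
        dotProduct_smul, smul_eq_mul]
      rw [dotProduct_comm x (M.mulVec y), dotProduct_comm x (M.mulVec x),
        dotProduct_comm y (M.mulVec y), dotProduct_comm y (M.mulVec x),
        hsymm y x]
      ring
    rw [hexp] at h0
    exact h0
  have hd := discrim_le_zero key
  rw [discrim] at hd
  nlinarith [hd]

/-- Under coercivity `⟨K_μ q, q⟩ ≥ α̃₀ ⟨Kq, q⟩` and the Poincaré inequality
`c_Ω² ⟨Mq, q⟩ ≤ ⟨Kq, q⟩`, the full discrete optimal control saddle point problem satisfies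
the inf-sup condition with constant `c_Ω α̃₀`: for every nonzero `q`, the supremum over
nonzero pairs `(v, z)` of
`(⟨K_μ z, q⟩ − ⟨Mv, q⟩) / ((2β⟨Mv,v⟩ + ⟨Mz,z⟩)^{1/2} ⟨Kq,q⟩^{1/2})` is at least `c_Ω α̃₀`. -/
theorem full_problem_infSup {n : ℕ}
    (M K Kμ : Matrix (Fin n) (Fin n) ℝ) (hM : M.PosDef) (hK : K.PosDef)
    (α₀ cΩ β : ℝ) (hα₀ : 0 < α₀) (hcΩ : 0 < cΩ) (hβ : 0 < β)
    (hcoer : ∀ q : Fin n → ℝ, α₀ * ((K.mulVec q) ⬝ᵥ q) ≤ (Kμ.mulVec q) ⬝ᵥ q)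
    (hpoin : ∀ q : Fin n → ℝ, cΩ ^ 2 * ((M.mulVec q) ⬝ᵥ q) ≤ (K.mulVec q) ⬝ᵥ q) :
    ∀ q : Fin n → ℝ, q ≠ 0 →
      cΩ * α₀ ≤ sSup {r : ℝ | ∃ v z : Fin n → ℝ, (v, z) ≠ (0, 0) ∧
        r = ((Kμ.mulVec z) ⬝ᵥ q - (M.mulVec v) ⬝ᵥ q) /
          (Real.sqrt (2 * β * ((M.mulVec v) ⬝ᵥ v) + (M.mulVec z) ⬝ᵥ z) *
            Real.sqrt ((K.mulVec q) ⬝ᵥ q))} := by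
  intro q hq
  have hMpsd := hM.posSemidef
  have key : ∀ (A : Matrix (Fin n) (Fin n) ℝ) (x y : Fin n → ℝ),
      A.mulVec x ⬝ᵥ y = x ⬝ᵥ Aᵀ.mulVec y := by
    intro A x y
    calc A.mulVec x ⬝ᵥ y = y ⬝ᵥ A.mulVec x := dotProduct_comm _ _
      _ = y ᵥ* A ⬝ᵥ x := Matrix.dotProduct_mulVec _ _ _
      _ = Aᵀ.mulVec y ⬝ᵥ x := by rw [Matrix.mulVec_transpose]
      _ = x ⬝ᵥ Aᵀ.mulVec y := dotProduct_comm _ _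
  have hsymM : Mᵀ = M := by
    rw [← Matrix.conjTranspose_eq_transpose_of_trivial]; exact hM.1
  have hMsymm : ∀ a b : Fin n → ℝ, M.mulVec a ⬝ᵥ b = a ⬝ᵥ M.mulVec b := by
    intro a b; rw [key M a b, hsymM]
  have hquadM : ∀ x, 0 ≤ M.mulVec x ⬝ᵥ x := by
    intro x
    have := hMpsd.dotProduct_mulVec_nonneg x
    simpa [star_trivial, dotProduct_comm] using this
  have hquadMpos : ∀ x, x ≠ 0 → 0 < M.mulVec x ⬝ᵥ x := by
    intro x hx
    have := hM.dotProduct_mulVec_pos hx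
    simpa [star_trivial, dotProduct_comm] using this
  have hMq : 0 < M.mulVec q ⬝ᵥ q := hquadMpos q hq
  have hKq : 0 < K.mulVec q ⬝ᵥ q := by
    have := hK.dotProduct_mulVec_pos hq
    simpa [star_trivial, dotProduct_comm] using this
  set k : ℝ := K.mulVec q ⬝ᵥ q with hk
  set m : ℝ := M.mulVec q ⬝ᵥ q with hm
  -- the witness value
  have hmem : (Kμ.mulVec q ⬝ᵥ q - M.mulVec 0 ⬝ᵥ q) /
      (Real.sqrt (2 * β * (M.mulVec 0 ⬝ᵥ 0) + M.mulVec q ⬝ᵥ q) * Real.sqrt k) ∈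
      {r : ℝ | ∃ v z : Fin n → ℝ, (v, z) ≠ (0, 0) ∧
        r = ((Kμ.mulVec z) ⬝ᵥ q - (M.mulVec v) ⬝ᵥ q) /
          (Real.sqrt (2 * β * ((M.mulVec v) ⬝ᵥ v) + (M.mulVec z) ⬝ᵥ z) *
            Real.sqrt ((K.mulVec q) ⬝ᵥ q))} := by
    exact ⟨0, q, by simp [hq, Prod.ext_iff], rfl⟩
  -- boundedness above
  have hM_unit : IsUnit M := hM.isUnit
  set w : Fin n → ℝ := (M⁻¹ * Kμᵀ).mulVec q with hw
  have hMw : M.mulVec w = Kμᵀ.mulVec q := by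
    rw [hw, Matrix.mulVec_mulVec, ← Matrix.mul_assoc, Matrix.mul_nonsing_inv _
      (Matrix.isUnit_iff_isUnit_det M |>.mp hM_unit), Matrix.one_mul]
  set C1 : ℝ := Real.sqrt (M.mulVec w ⬝ᵥ w) with hC1
  set C2 : ℝ := Real.sqrt m with hC2
  have hC1n : 0 ≤ C1 := Real.sqrt_nonneg _
  have hC2n : 0 ≤ C2 := Real.sqrt_nonneg _
  have h2β : (0:ℝ) < 2 * β := by linarith
  have h2βs : 0 < Real.sqrt (2 * β) := Real.sqrt_pos.mpr h2β
  have hsk : 0 < Real.sqrt k := Real.sqrt_pos.mpr hKq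
  have hbdd : BddAbove {r : ℝ | ∃ v z : Fin n → ℝ, (v, z) ≠ (0, 0) ∧
        r = ((Kμ.mulVec z) ⬝ᵥ q - (M.mulVec v) ⬝ᵥ q) /
          (Real.sqrt (2 * β * ((M.mulVec v) ⬝ᵥ v) + (M.mulVec z) ⬝ᵥ z) *
            Real.sqrt ((K.mulVec q) ⬝ᵥ q))} := by
    refine ⟨(C1 + C2 / Real.sqrt (2 * β)) / Real.sqrt k, ?_⟩
    rintro r ⟨v, z, hvz, rfl⟩
    set a : ℝ := M.mulVec v ⬝ᵥ v with ha
    set b : ℝ := M.mulVec z ⬝ᵥ z with hb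
    have han : 0 ≤ a := hquadM v
    have hbn : 0 ≤ b := hquadM z
    have hden : 0 < 2 * β * a + b := by
      rcases eq_or_ne v 0 with hv | hv
      · have hz : z ≠ 0 := by intro h; exact hvz (by rw [hv, h])
        have hbpos : 0 < b := by rw [hb]; exact hquadMpos z hz
        nlinarith
      · have hapos : 0 < a := by rw [ha]; exact hquadMpos v hv
        nlinarith
    -- bound numerator
    have hKμbound : Kμ.mulVec z ⬝ᵥ q ≤ Real.sqrt b * C1 := by
      have heq : Kμ.mulVec z ⬝ᵥ q = M.mulVec z ⬝ᵥ w := by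
        calc Kμ.mulVec z ⬝ᵥ q = z ⬝ᵥ Kμᵀ.mulVec q := key Kμ z q
          _ = z ⬝ᵥ M.mulVec w := by rw [hMw]
          _ = M.mulVec z ⬝ᵥ w := (hMsymm z w).symm
      have hcs := psd_cauchy_schwarz hMpsd z w
      rw [heq]
      calc M.mulVec z ⬝ᵥ w ≤ |M.mulVec z ⬝ᵥ w| := le_abs_self _
        _ = Real.sqrt ((M.mulVec z ⬝ᵥ w) ^ 2) := (Real.sqrt_sq_eq_abs _).symm
        _ ≤ Real.sqrt ((M.mulVec z ⬝ᵥ z) * (M.mulVec w ⬝ᵥ w)) := Real.sqrt_le_sqrt hcs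
        _ = Real.sqrt b * C1 := by rw [Real.sqrt_mul hbn, hC1]
    have hMbound : -(M.mulVec v ⬝ᵥ q) ≤ Real.sqrt a * C2 := by
      have hcs := psd_cauchy_schwarz hMpsd v q
      calc -(M.mulVec v ⬝ᵥ q) ≤ |M.mulVec v ⬝ᵥ q| := neg_le_abs _
        _ = Real.sqrt ((M.mulVec v ⬝ᵥ q) ^ 2) := (Real.sqrt_sq_eq_abs _).symm
        _ ≤ Real.sqrt ((M.mulVec v ⬝ᵥ v) * (M.mulVec q ⬝ᵥ q)) := Real.sqrt_le_sqrt hcs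
        _ = Real.sqrt a * C2 := by rw [Real.sqrt_mul han, hC2]
    have hsb : Real.sqrt b ≤ Real.sqrt (2 * β * a + b) :=
      Real.sqrt_le_sqrt (by nlinarith)
    have hsa : Real.sqrt a ≤ Real.sqrt (2 * β * a + b) / Real.sqrt (2 * β) := by
      rw [le_div_iff₀ h2βs, ← Real.sqrt_mul han]
      exact Real.sqrt_le_sqrt (by nlinarith)
    have hsd : 0 < Real.sqrt (2 * β * a + b) := Real.sqrt_pos.mpr hden
    have hnum : Kμ.mulVec z ⬝ᵥ q - M.mulVec v ⬝ᵥ q ≤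
        (C1 + C2 / Real.sqrt (2 * β)) * Real.sqrt (2 * β * a + b) := by
      have t1 : Kμ.mulVec z ⬝ᵥ q ≤ Real.sqrt (2 * β * a + b) * C1 :=
        hKμbound.trans (by nlinarith)
      have t2 : -(M.mulVec v ⬝ᵥ q) ≤ (Real.sqrt (2 * β * a + b) / Real.sqrt (2 * β)) * C2 :=
        hMbound.trans (by nlinarith)
      have h3 := add_le_add t1 t2
      calc Kμ.mulVec z ⬝ᵥ q - M.mulVec v ⬝ᵥ q
          = Kμ.mulVec z ⬝ᵥ q + -(M.mulVec v ⬝ᵥ q) := by ring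
        _ ≤ Real.sqrt (2 * β * a + b) * C1
            + (Real.sqrt (2 * β * a + b) / Real.sqrt (2 * β)) * C2 := h3
        _ = (C1 + C2 / Real.sqrt (2 * β)) * Real.sqrt (2 * β * a + b) := by ring
    rw [div_le_div_iff₀ (by positivity) hsk, ← hk]
    calc (Kμ.mulVec z ⬝ᵥ q - M.mulVec v ⬝ᵥ q) * Real.sqrt k
        ≤ ((C1 + C2 / Real.sqrt (2 * β)) * Real.sqrt (2 * β * a + b)) * Real.sqrt k :=
          mul_le_mul_of_nonneg_right hnum hsk.le
      _ = (C1 + C2 / Real.sqrt (2 * β)) * (Real.sqrt (2 * β * a + b) * Real.sqrt k) := by ring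
  -- the witness value is at least cΩ * α₀
  refine le_trans ?_ (le_csSup hbdd hmem)
  have hv0 : M.mulVec (0 : Fin n → ℝ) ⬝ᵥ q = 0 := by simp
  have hv00 : M.mulVec (0 : Fin n → ℝ) ⬝ᵥ (0 : Fin n → ℝ) = 0 := by simp
  rw [hv0, hv00, sub_zero, ← hm]
  have hzero : 2 * β * 0 + m = m := by ring
  rw [hzero]
  have hsm : 0 < Real.sqrt m := Real.sqrt_pos.mpr hMq
  have h1 : cΩ * Real.sqrt m ≤ Real.sqrt k := by
    have h2 : Real.sqrt (cΩ ^ 2 * (M.mulVec q ⬝ᵥ q)) ≤ Real.sqrt (K.mulVec q ⬝ᵥ q) :=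
      Real.sqrt_le_sqrt (hpoin q)
    rwa [Real.sqrt_mul (sq_nonneg cΩ), Real.sqrt_sq hcΩ.le] at h2
  have hdenom : Real.sqrt m * Real.sqrt k ≤ k / cΩ := by
    rw [le_div_iff₀ hcΩ]
    nlinarith [Real.sq_sqrt hKq.le, mul_le_mul_of_nonneg_right h1 hsk.le]
  have hnum : α₀ * k ≤ Kμ.mulVec q ⬝ᵥ q := hcoer q
  have hstep : cΩ * α₀ ≤ (α₀ * k) / (Real.sqrt m * Real.sqrt k) := by
    rw [le_div_iff₀ (by positivity)]
    calc cΩ * α₀ * (Real.sqrt m * Real.sqrt k) ≤ cΩ * α₀ * (k / cΩ) :=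
          mul_le_mul_of_nonneg_left hdenom (by positivity)
      _ = α₀ * k := by
          rw [mul_comm cΩ α₀, mul_assoc, mul_div_assoc', mul_div_cancel_left₀ _ (ne_of_gt hcΩ)]
  refine hstep.trans ?_
  gcongr
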